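/- For every prime power q, the number of edges of the unitary polarity graph G_{q²}^π equals (q⁶ − q³)/2, i.e., the binomial coefficient C(q³, 2). -/

import Mathlib

/-- The unitary polarity graph `G_{q²}^π`: vertices are pairs over the field of order `q²`,
with `(x, y)` adjacent to `(z, w)` iff they are distinct and `x * z^q = y + w^q`. -/
def unitaryPolarityGraph (q : ℕ) (F : Type*) [Field F] : SimpleGraph (F × F) :=
  SimpleGraph.fromRel (fun u v => u.1 * v.1 ^ q = u.2 + v.2 ^ q)

theorem card_edgeSet_unitaryPolarityGraph
    (q : ℕ) (hq : IsPrimePow q) (F : Type*) [Field F] [Fintype F]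
    (hF : Fintype.card F = q ^ 2) :
    (unitaryPolarityGraph q F).edgeSet.ncard = (q ^ 6 - q ^ 3) / 2 ∧
    (unitaryPolarityGraph q F).edgeSet.ncard = Nat.choose (q ^ 3) 2 := by
  classical
  have hq2 : 2 ≤ q := hq.two_le
  have hq0 : 0 < q := by omega
  obtain ⟨p, n, hp, hn, hpq⟩ := hq
  have hpp : p.Prime := hp.nat_prime
  haveI : Fact p.Prime := ⟨hpp⟩
  -- characteristic
  haveI hchar : CharP F p := by
    rw [CharP.charP_iff_prime_eq_zero hpp]
    have h0 := FiniteField.cast_card_eq_zero F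
    rw [hF, ← hpq] at h0
    push_cast at h0
    have h1 : ((p : F) ^ n) = 0 :=
      (pow_eq_zero_iff (two_ne_zero)).mp h0
    exact (pow_eq_zero_iff hn.ne').mp h1
  -- Frobenius additivity
  have hσ : ∀ a b : F, (a + b) ^ q = a ^ q + b ^ q := by
    intro a b
    rw [← hpq]
    exact add_pow_char_pow a b p n
  have hσ' : ∀ a b : F, (a - b) ^ q = a ^ q - b ^ q := by
    intro a b
    have h := hσ (a - b) b
    rw [sub_add_cancel] at h
    linear_combination -h
  -- q-th power is an involution up to one more application
  have hpow2 : ∀ a : F, (a ^ q) ^ q = a := by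
    intro a
    rw [← pow_mul]
    have : q * q = Fintype.card F := by rw [hF]; ring
    rw [this]
    exact FiniteField.pow_card a
  set G := unitaryPolarityGraph q F with hG
  -- adjacency characterization
  have hadj : ∀ u v : F × F, G.Adj u v ↔ u ≠ v ∧ u.1 * v.1 ^ q = u.2 + v.2 ^ q := by
    intro u v
    constructor
    · intro h
      rw [hG, unitaryPolarityGraph, SimpleGraph.fromRel_adj] at h
      obtain ⟨hne, h | h⟩ := h
      · exact ⟨hne, h⟩
      · refine ⟨hne, ?_⟩
        have h2 := congrArg (· ^ q) h
        simp only [mul_pow, hσ] at h2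
        rw [hpow2, hpow2] at h2
        linear_combination h2
    · rintro ⟨hne, h⟩
      rw [hG, unitaryPolarityGraph, SimpleGraph.fromRel_adj]
      exact ⟨hne, Or.inl h⟩
  -- the "row" finset of solutions for a fixed vertex u
  have hAcard : ∀ u : F × F,
      (Finset.univ.filter fun v : F × F => u.1 * v.1 ^ q = u.2 + v.2 ^ q).card = q ^ 2 := by
    intro u
    have himg : (Finset.univ.filter fun v : F × F => u.1 * v.1 ^ q = u.2 + v.2 ^ q) =
        Finset.univ.image (fun z : F => (z, (u.1 * z ^ q - u.2) ^ q)) := by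
      ext v
      simp only [Finset.mem_filter, Finset.mem_univ, true_and, Finset.mem_image]
      constructor
      · intro h
        refine ⟨v.1, ?_⟩
        have h2 : u.1 * v.1 ^ q - u.2 = v.2 ^ q := by linear_combination h
        rw [h2, hpow2]
      · rintro ⟨z, rfl⟩
        simp only
        rw [hpow2]
        ring
    rw [himg, Finset.card_image_of_injective _ (fun a b h => congrArg Prod.fst h),
      Finset.card_univ, hF]
  -- degree computation
  have hdeg : ∀ u : F × F,
      G.degree u + (if u.1 * u.1 ^ q = u.2 + u.2 ^ q then 1 else 0) = q ^ 2 := by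
    intro u
    rw [← SimpleGraph.card_neighborFinset_eq_degree, SimpleGraph.neighborFinset_eq_filter]
    have hfe : Finset.univ.filter (G.Adj u) =
        (Finset.univ.filter fun v : F × F => u.1 * v.1 ^ q = u.2 + v.2 ^ q).erase u := by
      ext v
      simp only [Finset.mem_filter, Finset.mem_univ, true_and, Finset.mem_erase, hadj]
      tauto
    rw [hfe]
    by_cases hu : u ∈ Finset.univ.filter fun v : F × F => u.1 * v.1 ^ q = u.2 + v.2 ^ q
    · have hcond : u.1 * u.1 ^ q = u.2 + u.2 ^ q := by
        simpa using hu
      rw [Finset.card_erase_of_mem hu, hAcard, if_pos hcond]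
      have : 1 ≤ q ^ 2 := Nat.one_le_pow _ _ hq0
      omega
    · have hcond : ¬ (u.1 * u.1 ^ q = u.2 + u.2 ^ q) := by
        simpa using hu
      rw [Finset.erase_eq_of_notMem hu, hAcard, if_neg hcond]
      omega
  -- number of absolute points (loops)
  -- root counting lemma
  have hroots : ∀ b c : F, b ≠ 0 →
      (Finset.univ.filter fun a : F => a ^ q + b * a + c = 0).card ≤ q := by
    intro b c hb
    set P : Polynomial F := Polynomial.X ^ q + Polynomial.C b * Polynomial.X + Polynomial.C c
      with hP
    have hPco : P.coeff 1 = b := by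
      rw [hP]
      simp [Polynomial.coeff_X_pow, Polynomial.coeff_C]
      omega
    have hPne : P ≠ 0 := by
      intro h
      rw [h] at hPco
      simp at hPco
      exact hb hPco.symm
    have hdegP : P.natDegree ≤ q := by
      rw [hP]
      refine le_trans (Polynomial.natDegree_add_le _ _) ?_
      simp only [Polynomial.natDegree_C, max_le_iff]
      refine ⟨le_trans (Polynomial.natDegree_add_le _ _) ?_, by omega⟩
      simp only [Polynomial.natDegree_X_pow, max_le_iff]
      exact ⟨le_refl q, le_trans (Polynomial.natDegree_C_mul_le _ _)
        (by simp [Polynomial.natDegree_X]; omega)⟩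
    have hsub : (Finset.univ.filter fun a : F => a ^ q + b * a + c = 0) ⊆
        P.roots.toFinset := by
      intro a ha
      simp only [Finset.mem_filter, Finset.mem_univ, true_and] at ha
      rw [Multiset.mem_toFinset, Polynomial.mem_roots hPne]
      simp [Polynomial.IsRoot, hP, ha]
    calc (Finset.univ.filter fun a : F => a ^ q + b * a + c = 0).card
        ≤ P.roots.toFinset.card := Finset.card_le_card hsub
      _ ≤ Multiset.card P.roots := Multiset.toFinset_card_le _
      _ ≤ P.natDegree := Polynomial.card_roots' P
      _ ≤ q := hdegP
  -- kernel of the trace map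
  have hK : (Finset.univ.filter fun y : F => y + y ^ q = 0).card ≤ q := by
    have he : (Finset.univ.filter fun y : F => y + y ^ q = 0) =
        (Finset.univ.filter fun a : F => a ^ q + 1 * a + 0 = 0) := by
      ext a
      simp only [Finset.mem_filter, Finset.mem_univ, true_and]
      constructor <;> intro h <;> linear_combination h
    rw [he]
    exact hroots 1 0 one_ne_zero
  -- fixed points of Frobenius
  have hS : (Finset.univ.filter fun a : F => a ^ q = a).card ≤ q := by
    have he : (Finset.univ.filter fun a : F => a ^ q = a) =
        (Finset.univ.filter fun a : F => a ^ q + (-1) * a + 0 = 0) := by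
      ext a
      simp only [Finset.mem_filter, Finset.mem_univ, true_and]
      constructor <;> intro h <;> linear_combination h
    rw [he]
    exact hroots (-1) 0 (by norm_num)
  -- fibers of the trace map all have the kernel's size
  have hfiber : ∀ c : F, (∃ y₀ : F, y₀ + y₀ ^ q = c) →
      (Finset.univ.filter fun y : F => y + y ^ q = c).card =
      (Finset.univ.filter fun y : F => y + y ^ q = 0).card := by
    intro c ⟨y₀, hy₀⟩
    have he : (Finset.univ.filter fun y : F => y + y ^ q = c) =
        (Finset.univ.filter fun y : F => y + y ^ q = 0).image (· + y₀) := by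
      ext z
      simp only [Finset.mem_filter, Finset.mem_univ, true_and, Finset.mem_image]
      constructor
      · intro hz
        refine ⟨z - y₀, ?_, by ring⟩
        have h1 := hσ' z y₀
        linear_combination hz - hy₀ + h1
      · rintro ⟨k, hk, rfl⟩
        have h1 := hσ k y₀
        linear_combination hk + hy₀ + h1
    rw [he, Finset.card_image_of_injective _ (add_left_injective y₀)]
  -- card F = |image of trace| * |kernel|
  have hprod : q ^ 2 =
      ((Finset.univ.image fun y : F => y + y ^ q).card) *
      (Finset.univ.filter fun y : F => y + y ^ q = 0).card := by
    have h := Finset.card_eq_sum_card_image (fun y : F => y + y ^ q) (Finset.univ : Finset F)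
    rw [Finset.card_univ, hF] at h
    rw [h]
    rw [Finset.sum_congr rfl (fun b hb => ?_), Finset.sum_const, smul_eq_mul]
    obtain ⟨y₀, _, hy₀⟩ := Finset.mem_image.mp hb
    exact hfiber b ⟨y₀, hy₀⟩
  -- image of trace is contained in fixed points of Frobenius
  have himsub : (Finset.univ.image fun y : F => y + y ^ q) ⊆
      (Finset.univ.filter fun a : F => a ^ q = a) := by
    intro a ha
    obtain ⟨y, _, rfl⟩ := Finset.mem_image.mp ha
    simp only [Finset.mem_filter, Finset.mem_univ, true_and]
    rw [hσ, hpow2]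
    ring
  have himle : (Finset.univ.image fun y : F => y + y ^ q).card ≤ q :=
    le_trans (Finset.card_le_card himsub) hS
  -- deduce exact cardinalities
  have hKpos : 0 < (Finset.univ.filter fun y : F => y + y ^ q = 0).card := by
    refine Finset.card_pos.mpr ⟨0, ?_⟩
    simp [zero_pow (by omega : q ≠ 0)]
  have himq : (Finset.univ.image fun y : F => y + y ^ q).card = q := by
    have h1 : q * q ≤ (Finset.univ.image fun y : F => y + y ^ q).card * q := by
      calc q * q = q ^ 2 := by ring
        _ = _ := hprod
        _ ≤ _ := Nat.mul_le_mul_left _ hK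
    exact le_antisymm himle (Nat.le_of_mul_le_mul_right h1 hq0)
  have hKq : (Finset.univ.filter fun y : F => y + y ^ q = 0).card = q := by
    have h2 : q * q = q * (Finset.univ.filter fun y : F => y + y ^ q = 0).card := by
      calc q * q = q ^ 2 := by ring
        _ = q * (Finset.univ.filter fun y : F => y + y ^ q = 0).card := by
            rw [hprod, himq]
    exact (Nat.eq_of_mul_eq_mul_left hq0 h2).symm
  have himeq : (Finset.univ.image fun y : F => y + y ^ q) =
      (Finset.univ.filter fun a : F => a ^ q = a) := by
    refine Finset.eq_of_subset_of_card_le himsub ?_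
    rw [himq]
    exact hS
  -- every norm value is a trace value
  have hNorm : ∀ x : F, ∃ y₀ : F, y₀ + y₀ ^ q = x * x ^ q := by
    intro x
    have hmem : x * x ^ q ∈ (Finset.univ.filter fun a : F => a ^ q = a) := by
      simp only [Finset.mem_filter, Finset.mem_univ, true_and]
      rw [mul_pow, hpow2]
      ring
    rw [← himeq] at hmem
    obtain ⟨y₀, _, hy₀⟩ := Finset.mem_image.mp hmem
    exact ⟨y₀, hy₀⟩
  -- number of loops is q^3
  have hL : (Finset.univ.filter fun u : F × F => u.1 * u.1 ^ q = u.2 + u.2 ^ q).card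
      = q ^ 3 := by
    have h := Finset.card_eq_sum_card_fiberwise
      (f := Prod.fst) (s := Finset.univ.filter fun u : F × F => u.1 * u.1 ^ q = u.2 + u.2 ^ q)
      (t := (Finset.univ : Finset F)) (fun x _ => Finset.mem_univ _)
    rw [h]
    have hx : ∀ x : F,
        ((Finset.univ.filter fun u : F × F => u.1 * u.1 ^ q = u.2 + u.2 ^ q).filter
          fun u => u.1 = x).card = q := by
      intro x
      have he : ((Finset.univ.filter fun u : F × F => u.1 * u.1 ^ q = u.2 + u.2 ^ q).filter
          fun u => u.1 = x) =
          (Finset.univ.filter fun y : F => y + y ^ q = x * x ^ q).image (fun y => (x, y)) := by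
        ext u
        simp only [Finset.mem_filter, Finset.mem_univ, true_and, Finset.mem_image]
        constructor
        · rintro ⟨h1, rfl⟩
          exact ⟨u.2, h1.symm, rfl⟩
        · rintro ⟨y, hy, rfl⟩
          exact ⟨hy.symm, rfl⟩
      rw [he, Finset.card_image_of_injective _ (fun a b hab => (Prod.mk.injEq _ _ _ _).mp hab
        |>.2)]
      rw [hfiber _ (hNorm x), hKq]
    rw [Finset.sum_congr rfl (fun x _ => hx x), Finset.sum_const, Finset.card_univ, hF,
      smul_eq_mul]
    ring
  -- handshake
  have hhs := G.sum_degrees_eq_twice_card_edges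
  have hsum : (∑ u : F × F, G.degree u) +
      (Finset.univ.filter fun u : F × F => u.1 * u.1 ^ q = u.2 + u.2 ^ q).card
      = q ^ 6 := by
    have h1 : (∑ u : F × F,
        (G.degree u + (if u.1 * u.1 ^ q = u.2 + u.2 ^ q then 1 else 0))) = q ^ 6 := by
      rw [Finset.sum_congr rfl (fun u _ => hdeg u), Finset.sum_const, Finset.card_univ,
        Fintype.card_prod, hF, smul_eq_mul]
      ring
    rw [Finset.sum_add_distrib] at h1
    rw [← h1]
    congr 1
    exact_mod_cast (Finset.sum_boole (fun u : F × F => u.1 * u.1 ^ q = u.2 + u.2 ^ q) Finset.univ).symm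
  have hE : 2 * G.edgeFinset.card + q ^ 3 = q ^ 6 := by
    rw [← hhs, ← hL]
    exact hsum
  have hncard : G.edgeSet.ncard = G.edgeFinset.card := by
    rw [Set.ncard_eq_toFinset_card' G.edgeSet]
    congr 1
  have h1q3 : 1 ≤ q ^ 3 := Nat.one_le_pow _ _ hq0
  have h6 : q ^ 6 = q ^ 3 * q ^ 3 := by ring
  obtain ⟨k, hk⟩ : ∃ k, q ^ 3 = k + 1 := ⟨q ^ 3 - 1, by omega⟩
  have hmul : q ^ 3 * (q ^ 3 - 1) = q ^ 6 - q ^ 3 := by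
    rw [h6, hk]
    simp [Nat.mul_succ, Nat.add_sub_cancel]
  constructor
  · rw [hncard]; omega
  · rw [hncard, Nat.choose_two_right]
    omega
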